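/- For H ∈ (1/2, 1), T > 0, and 0 < s < t ≤ T, with R^Y(t,s) = H∫₀^{s∧t}((s∧t)−a)^{−1/2}(((s∨t)+a)^{2H−1} − ((s∨t)−a)^{2H−1})da, one has R^Y(t,t) − 2R^Y(t,s) + R^Y(s,s) ≤ C·(t−s)^{1/2} for a constant C depending only on H and T. -/

import Mathlib

open MeasureTheory

noncomputable def RY (H t s : ℝ) : ℝ :=
  H * ∫ a in (0:ℝ)..(min s t),
    (min s t - a) ^ (-(1:ℝ)/2) * ((max s t + a) ^ (2*H - 1) - (max s t - a) ^ (2*H - 1))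

open Real

lemma aux_sub {p a b : ℝ} (ha : 0 ≤ a) (hb : 0 ≤ b) (hp0 : 0 ≤ p) (hp1 : p ≤ 1) :
    (a + b) ^ p ≤ a ^ p + b ^ p := by
  have h := NNReal.rpow_add_le_add_rpow a.toNNReal b.toNNReal hp0 hp1
  have := NNReal.coe_le_coe.2 h
  simpa [NNReal.coe_rpow, Real.coe_toNNReal a ha, Real.coe_toNNReal b hb] using this

lemma aux_holder {p x y : ℝ} (hy : 0 ≤ y) (hxy : y ≤ x) (hp0 : 0 ≤ p) (hp1 : p ≤ 1) :
    x ^ p - y ^ p ≤ (x - y) ^ p := by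
  have h := aux_sub hy (sub_nonneg.2 hxy) hp0 hp1
  rw [add_sub_cancel] at h
  linarith

lemma aux_bern {p x y : ℝ} (hy : 0 < y) (hxy : y ≤ x) (hp0 : 0 ≤ p) (hp1 : p ≤ 1) :
    x ^ p - y ^ p ≤ p * y ^ (p - 1) * (x - y) := by
  have hs : (0:ℝ) ≤ (x - y) / y := div_nonneg (by linarith) hy.le
  have hB := rpow_one_add_le_one_add_mul_self (by linarith : (-1:ℝ) ≤ (x-y)/y) hp0 hp1
  have hx : x = y * (1 + (x - y)/y) := by field_simp; ring
  have h1 : x ^ p = y ^ p * (1 + (x-y)/y) ^ p := by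
    rw [← Real.mul_rpow hy.le (by linarith), ← hx]
  have h2 : x ^ p ≤ y ^ p * (1 + p * ((x-y)/y)) := by
    rw [h1]; exact mul_le_mul_of_nonneg_left hB (rpow_nonneg hy.le p)
  have h3 : y ^ (p - 1) = y ^ p / y := Real.rpow_sub_one hy.ne' p
  have h4 : y ^ p * (p * ((x-y)/y)) = p * (y ^ p / y) * (x - y) := by
    field_simp
  rw [h3]; nlinarith [Real.rpow_nonneg hy.le p]

lemma aux_key {p x y : ℝ} (hy : 0 < y) (hxy : y < x) (hp0 : 0 ≤ p) (hp1 : p ≤ 1) :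
    x ^ p - y ^ p ≤ (x - y) ^ ((p+1)/2) * y ^ ((p-1)/2) := by
  have hd : 0 < x - y := sub_pos.2 hxy
  have h0 : 0 ≤ x ^ p - y ^ p := sub_nonneg.2 (Real.rpow_le_rpow hy.le hxy.le hp0)
  have hA := aux_holder hy.le hxy.le hp0 hp1
  have hB := aux_bern hy hxy.le hp0 hp1
  set R := (x - y) ^ ((p+1)/2) * y ^ ((p-1)/2) with hR
  have hRnn : 0 ≤ R := by positivity
  have hR2 : R ^ 2 = (x - y) ^ (p+1) * y ^ (p-1) := by
    rw [hR, mul_pow, ← Real.rpow_natCast ((x-y)^((p+1)/2)) 2,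
      ← Real.rpow_natCast (y^((p-1)/2)) 2, ← Real.rpow_mul hd.le, ← Real.rpow_mul hy.le]
    norm_num
  have hsq : (x ^ p - y ^ p) ^ 2 ≤ R ^ 2 := by
    have hm : (x ^ p - y ^ p) * (x ^ p - y ^ p) ≤ (x-y)^p * (p * y ^ (p-1) * (x-y)) :=
      mul_le_mul hA hB h0 (Real.rpow_nonneg hd.le p)
    have h1 : (x-y)^(p+1) = (x-y)^p * (x-y) := Real.rpow_add_one hd.ne' p
    have hyp : 0 ≤ y ^ (p-1) := Real.rpow_nonneg hy.le _
    have hxp : 0 ≤ (x-y) ^ p := Real.rpow_nonneg hd.le _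
    have hple : p * y ^ (p-1) ≤ y ^ (p-1) := by nlinarith
    have hm2 : (x-y)^p * (p * y ^ (p-1) * (x-y)) ≤ (x-y)^p * (y ^ (p-1) * (x-y)) := by
      apply mul_le_mul_of_nonneg_left _ hxp
      apply mul_le_mul_of_nonneg_right hple hd.le
    rw [hR2, h1, pow_two]
    calc (x ^ p - y ^ p) * (x ^ p - y ^ p) ≤ (x-y)^p * (y ^ (p-1) * (x-y)) := le_trans hm hm2
      _ = (x - y) ^ p * (x - y) * y ^ (p - 1) := by ring
  calc x ^ p - y ^ p = Real.sqrt ((x ^ p - y ^ p) ^ 2) := (Real.sqrt_sq h0).symm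
    _ ≤ Real.sqrt (R ^ 2) := Real.sqrt_le_sqrt hsq
    _ = R := Real.sqrt_sq hRnn

lemma aux_keyH {H x y : ℝ} (hH1 : 1/2 < H) (hH2 : H < 1) (hy : 0 < y) (hxy : y < x) :
    x ^ (2*H-1) - y ^ (2*H-1) ≤ (x - y) ^ H * y ^ (H-1) := by
  have h := aux_key (p := 2*H-1) hy hxy (by linarith) (by linarith)
  have e1 : (2*H-1+1)/2 = H := by ring
  have e2 : (2*H-1-1)/2 = H-1 := by ring
  rwa [e1, e2] at h

/-- integrand after the change of variables `a = (endpoint) - b`. -/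
noncomputable def gg (P c d : ℝ) : ℝ → ℝ :=
  fun b => b ^ (-(1:ℝ)/2) * ((c - b) ^ P - (d + b) ^ P)

lemma gg_integrable {P : ℝ} (hP : 0 < P) (c d u v : ℝ) :
    IntervalIntegrable (gg P c d) volume u v := by
  apply (intervalIntegral.intervalIntegrable_rpow' (by norm_num)).mul_continuousOn
  apply ContinuousOn.sub
  · exact (continuousOn_const.sub continuousOn_id).rpow_const (fun x _ => Or.inr hP.le)
  · exact (continuousOn_const.add continuousOn_id).rpow_const (fun x _ => Or.inr hP.le)

set_option maxHeartbeats 1000000 in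
theorem stmt17 (H T : ℝ) (hH1 : 1/2 < H) (hH2 : H < 1) (hT : 0 < T) :
    ∃ C > (0:ℝ), ∀ s t : ℝ, 0 < s → s < t → t ≤ T →
      RY H t t - 2 * RY H t s + RY H s s ≤ C * (t - s) ^ ((1:ℝ)/2) := by
  have hTP : 0 < T ^ (H - 1/2) := Real.rpow_pos_of_pos hT _
  have h2TP : 0 < (2*T) ^ (2*H - 1) := Real.rpow_pos_of_pos (by linarith) _
  refine ⟨H * (4 * T ^ (H - 1/2) * T ^ (H - 1/2) / (H - 1/2) + (2*T) ^ (2*H-1) * 2), ?_, ?_⟩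
  · have h1 : 0 < 4 * T ^ (H - 1/2) * T ^ (H - 1/2) / (H - 1/2) := by
      apply div_pos (by nlinarith) (by linarith)
    nlinarith
  intro s t hs hst htT
  have hts : 0 < t - s := by linarith
  have ht : 0 < t := by linarith
  have hP0 : (0:ℝ) < 2*H - 1 := by linarith
  -- rewrite the three RY values via the substitution a ↦ endpoint - b
  have hRYtt : RY H t t = H * ∫ b in (0:ℝ)..t, gg (2*H-1) (2*t) 0 b := by
    rw [RY, min_self, max_self]
    congr 1
    have h := intervalIntegral.integral_comp_sub_left (gg (2*H-1) (2*t) 0) t (a := 0) (b := t)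
    simp only [sub_self, sub_zero] at h
    rw [← h]
    apply intervalIntegral.integral_congr
    intro a _
    simp only [gg]
    rw [show 2*t - (t - a) = t + a by ring, show (0:ℝ) + (t - a) = t - a by ring]
  have hRYts : RY H t s = H * ∫ b in (0:ℝ)..s, gg (2*H-1) (t+s) (t-s) b := by
    rw [RY, min_eq_left hst.le, max_eq_right hst.le]
    congr 1
    have h := intervalIntegral.integral_comp_sub_left (gg (2*H-1) (t+s) (t-s)) s (a := 0) (b := s)
    simp only [sub_self, sub_zero] at h
    rw [← h]
    apply intervalIntegral.integral_congr
    intro a _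
    simp only [gg]
    rw [show t + s - (s - a) = t + a by ring, show t - s + (s - a) = t - a by ring]
  have hRYss : RY H s s = H * ∫ b in (0:ℝ)..s, gg (2*H-1) (2*s) 0 b := by
    rw [RY, min_self, max_self]
    congr 1
    have h := intervalIntegral.integral_comp_sub_left (gg (2*H-1) (2*s) 0) s (a := 0) (b := s)
    simp only [sub_self, sub_zero] at h
    rw [← h]
    apply intervalIntegral.integral_congr
    intro a _
    simp only [gg]
    rw [show 2*s - (s - a) = s + a by ring, show (0:ℝ) + (s - a) = s - a by ring]
  have h1s : IntervalIntegrable (gg (2*H-1) (2*t) 0) volume 0 s := gg_integrable hP0 _ _ _ _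
  have h1st : IntervalIntegrable (gg (2*H-1) (2*t) 0) volume s t := gg_integrable hP0 _ _ _ _
  have h2s : IntervalIntegrable (gg (2*H-1) (t+s) (t-s)) volume 0 s := gg_integrable hP0 _ _ _ _
  have h3s : IntervalIntegrable (gg (2*H-1) (2*s) 0) volume 0 s := gg_integrable hP0 _ _ _ _
  have hsplit : (∫ b in (0:ℝ)..t, gg (2*H-1) (2*t) 0 b)
      = (∫ b in (0:ℝ)..s, gg (2*H-1) (2*t) 0 b) + ∫ b in s..t, gg (2*H-1) (2*t) 0 b :=
    (intervalIntegral.integral_add_adjacent_intervals h1s h1st).symm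
  -- pointwise bound on [0, s] for the combined integrand
  have hpt : ∀ b ∈ Set.Icc (0:ℝ) s,
      gg (2*H-1) (2*t) 0 b - 2 * gg (2*H-1) (t+s) (t-s) b + gg (2*H-1) (2*s) 0 b
        ≤ 4 * (t-s) ^ H * b ^ (H - 3/2) := by
    intro b hb
    rcases hb.1.eq_or_lt with rfl | hb0
    · simp [gg, Real.zero_rpow (by norm_num : -(1:ℝ)/2 ≠ 0),
        Real.zero_rpow (by intro h; exact absurd h (by intro h'; nlinarith) : (H:ℝ) - 3/2 ≠ 0)]
    · have hbs : b ≤ s := hb.2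
      have k1 : (2*t - b) ^ (2*H-1) - (t+s-b) ^ (2*H-1) ≤ (t-s) ^ H * (t+s-b) ^ (H-1) := by
        have h := aux_keyH hH1 hH2 (show (0:ℝ) < t+s-b by linarith) (show t+s-b < 2*t-b by linarith)
        rwa [show 2*t - b - (t+s-b) = t - s by ring] at h
      have k1' : (t+s-b) ^ (H-1) ≤ b ^ (H-1) :=
        Real.rpow_le_rpow_of_nonpos hb0 (by linarith) (by linarith)
      have k1'' : (2*t - b) ^ (2*H-1) - (t+s-b) ^ (2*H-1) ≤ (t-s) ^ H * b ^ (H-1) :=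
        k1.trans (mul_le_mul_of_nonneg_left k1' (Real.rpow_nonneg hts.le H))
      have k2 : (2*s - b) ^ (2*H-1) ≤ (t+s-b) ^ (2*H-1) :=
        Real.rpow_le_rpow (by linarith) (by linarith) (by linarith)
      have k3 : (t-s+b) ^ (2*H-1) - b ^ (2*H-1) ≤ (t-s) ^ H * b ^ (H-1) := by
        have h := aux_keyH hH1 hH2 hb0 (show b < t-s+b by linarith)
        rwa [show t - s + b - b = t - s by ring] at h
      have hb12 : (0:ℝ) ≤ b ^ (-(1:ℝ)/2) := Real.rpow_nonneg hb0.le _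
      have hPhi : ((2*t - b) ^ (2*H-1) - (0+b) ^ (2*H-1))
            - 2 * ((t+s-b) ^ (2*H-1) - (t-s+b) ^ (2*H-1))
            + ((2*s - b) ^ (2*H-1) - (0+b) ^ (2*H-1))
          ≤ 3 * ((t-s) ^ H * b ^ (H-1)) := by
        rw [zero_add]
        linarith
      have hmul := mul_le_mul_of_nonneg_left hPhi hb12
      have hbid : b ^ (-(1:ℝ)/2) * b ^ (H-1) = b ^ (H - 3/2) := by
        rw [← Real.rpow_add hb0]; congr 1; ring
      have hXnn : (0:ℝ) ≤ (t-s) ^ H * b ^ (H - 3/2) :=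
        mul_nonneg (Real.rpow_nonneg hts.le _) (Real.rpow_nonneg hb0.le _)
      simp only [gg]
      calc gg (2*H-1) (2*t) 0 b - 2 * gg (2*H-1) (t+s) (t-s) b + gg (2*H-1) (2*s) 0 b
          = b ^ (-(1:ℝ)/2) * (((2*t - b) ^ (2*H-1) - (0+b) ^ (2*H-1))
            - 2 * ((t+s-b) ^ (2*H-1) - (t-s+b) ^ (2*H-1))
            + ((2*s - b) ^ (2*H-1) - (0+b) ^ (2*H-1))) := by simp only [gg]; ring
        _ ≤ b ^ (-(1:ℝ)/2) * (3 * ((t-s) ^ H * b ^ (H-1))) := hmul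
        _ = 3 * ((t-s) ^ H * b ^ (H - 3/2)) := by
            rw [show b ^ (-(1:ℝ)/2) * (3 * ((t-s) ^ H * b ^ (H-1)))
              = 3 * ((t-s) ^ H) * (b ^ (-(1:ℝ)/2) * b ^ (H-1)) by ring, hbid]; ring
        _ ≤ 4 * (t-s) ^ H * b ^ (H - 3/2) := by nlinarith
  -- the tail integrand bound on [s, t]
  have htail : ∀ b ∈ Set.Icc s t, gg (2*H-1) (2*t) 0 b ≤ (2*T) ^ (2*H-1) * b ^ (-(1:ℝ)/2) := by
    intro b hb
    have hb0 : 0 < b := lt_of_lt_of_le hs hb.1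
    have hb12 : (0:ℝ) ≤ b ^ (-(1:ℝ)/2) := Real.rpow_nonneg hb0.le _
    have hup : (2*t - b) ^ (2*H-1) - (0+b) ^ (2*H-1) ≤ (2*T) ^ (2*H-1) := by
      have h1 : (2*t - b) ^ (2*H-1) ≤ (2*T) ^ (2*H-1) :=
        Real.rpow_le_rpow (by linarith [hb.2]) (by linarith [hb.2]) (by linarith)
      have h2 : (0:ℝ) ≤ (0+b) ^ (2*H-1) := Real.rpow_nonneg (by linarith) _
      linarith
    calc gg (2*H-1) (2*t) 0 b
        = b ^ (-(1:ℝ)/2) * ((2*t - b) ^ (2*H-1) - (0+b) ^ (2*H-1)) := rfl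
      _ ≤ b ^ (-(1:ℝ)/2) * (2*T) ^ (2*H-1) := mul_le_mul_of_nonneg_left hup hb12
      _ = (2*T) ^ (2*H-1) * b ^ (-(1:ℝ)/2) := mul_comm _ _
  -- integrate the bounds
  have hbound_int : IntervalIntegrable (fun b : ℝ => 4 * (t-s) ^ H * b ^ (H - 3/2)) volume 0 s :=
    (intervalIntegral.intervalIntegrable_rpow' (by linarith)).const_mul _
  have hcomb_int : IntervalIntegrable (fun b => gg (2*H-1) (2*t) 0 b
      - 2 * gg (2*H-1) (t+s) (t-s) b + gg (2*H-1) (2*s) 0 b) volume 0 s :=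
    (h1s.sub (h2s.const_mul 2)).add h3s
  have hcomb : (∫ b in (0:ℝ)..s, (gg (2*H-1) (2*t) 0 b
        - 2 * gg (2*H-1) (t+s) (t-s) b + gg (2*H-1) (2*s) 0 b))
      ≤ ∫ b in (0:ℝ)..s, 4 * (t-s) ^ H * b ^ (H - 3/2) :=
    intervalIntegral.integral_mono_on hs.le hcomb_int hbound_int hpt
  have hlin : (∫ b in (0:ℝ)..s, (gg (2*H-1) (2*t) 0 b
        - 2 * gg (2*H-1) (t+s) (t-s) b + gg (2*H-1) (2*s) 0 b))
      = (∫ b in (0:ℝ)..s, gg (2*H-1) (2*t) 0 b)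
        - 2 * (∫ b in (0:ℝ)..s, gg (2*H-1) (t+s) (t-s) b)
        + ∫ b in (0:ℝ)..s, gg (2*H-1) (2*s) 0 b := by
    rw [intervalIntegral.integral_add (h1s.sub (h2s.const_mul 2)) h3s,
      intervalIntegral.integral_sub h1s (h2s.const_mul 2),
      intervalIntegral.integral_const_mul]
  have hval1 : (∫ b in (0:ℝ)..s, 4 * (t-s) ^ H * b ^ (H - 3/2))
      = 4 * (t-s) ^ H * (s ^ (H - 1/2) / (H - 1/2)) := by
    rw [intervalIntegral.integral_const_mul, integral_rpow (Or.inl (by linarith))]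
    rw [show H - 3/2 + 1 = H - 1/2 by ring, Real.zero_rpow (by intro h; nlinarith)]
    ring
  have htail2 : (∫ b in s..t, gg (2*H-1) (2*t) 0 b)
      ≤ (2*T) ^ (2*H-1) * (2 * (t-s) ^ ((1:ℝ)/2)) := by
    have hmono : (∫ b in s..t, gg (2*H-1) (2*t) 0 b)
        ≤ ∫ b in s..t, (2*T) ^ (2*H-1) * b ^ (-(1:ℝ)/2) :=
      intervalIntegral.integral_mono_on hst.le h1st
        ((intervalIntegral.intervalIntegrable_rpow' (by norm_num)).const_mul _) htail
    have hval2 : (∫ b in s..t, (2*T) ^ (2*H-1) * b ^ (-(1:ℝ)/2))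
        = (2*T) ^ (2*H-1) * ((t ^ ((1:ℝ)/2) - s ^ ((1:ℝ)/2)) / (1/2)) := by
      rw [intervalIntegral.integral_const_mul, integral_rpow (Or.inl (by norm_num))]
      norm_num
    have hsq : t ^ ((1:ℝ)/2) - s ^ ((1:ℝ)/2) ≤ (t-s) ^ ((1:ℝ)/2) := by
      have h := aux_sub hs.le hts.le (by norm_num : (0:ℝ) ≤ 1/2) (by norm_num)
      rw [show s + (t - s) = t by ring] at h
      linarith
    calc (∫ b in s..t, gg (2*H-1) (2*t) 0 b)
        ≤ (2*T) ^ (2*H-1) * ((t ^ ((1:ℝ)/2) - s ^ ((1:ℝ)/2)) / (1/2)) := hval2 ▸ hmono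
      _ ≤ (2*T) ^ (2*H-1) * (2 * (t-s) ^ ((1:ℝ)/2)) := by
          apply mul_le_mul_of_nonneg_left _ h2TP.le
          linarith
  -- put everything together
  have e1 : (t-s) ^ H = (t-s) ^ (H - 1/2) * (t-s) ^ ((1:ℝ)/2) := by
    rw [← Real.rpow_add hts]; congr 1; ring
  have b1 : (t-s) ^ (H - 1/2) ≤ T ^ (H - 1/2) :=
    Real.rpow_le_rpow hts.le (by linarith) (by linarith)
  have b2 : s ^ (H - 1/2) ≤ T ^ (H - 1/2) :=
    Real.rpow_le_rpow hs.le (by linarith) (by linarith)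
  have hu : (0:ℝ) ≤ (t-s) ^ ((1:ℝ)/2) := Real.rpow_nonneg hts.le _
  have hts12 : (0:ℝ) ≤ (t-s) ^ (H - 1/2) := Real.rpow_nonneg hts.le _
  have hs12 : (0:ℝ) ≤ s ^ (H - 1/2) := Real.rpow_nonneg hs.le _
  rw [hRYtt, hRYts, hRYss, hsplit]
  calc H * ((∫ b in (0:ℝ)..s, gg (2*H-1) (2*t) 0 b) + ∫ b in s..t, gg (2*H-1) (2*t) 0 b)
        - 2 * (H * ∫ b in (0:ℝ)..s, gg (2*H-1) (t+s) (t-s) b)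
        + H * ∫ b in (0:ℝ)..s, gg (2*H-1) (2*s) 0 b
      = H * (((∫ b in (0:ℝ)..s, gg (2*H-1) (2*t) 0 b)
          - 2 * (∫ b in (0:ℝ)..s, gg (2*H-1) (t+s) (t-s) b)
          + ∫ b in (0:ℝ)..s, gg (2*H-1) (2*s) 0 b) + ∫ b in s..t, gg (2*H-1) (2*t) 0 b) := by
        ring
    _ ≤ H * ((4 * (t-s) ^ H * (s ^ (H - 1/2) / (H - 1/2)))
          + (2*T) ^ (2*H-1) * (2 * (t-s) ^ ((1:ℝ)/2))) := by
        apply mul_le_mul_of_nonneg_left _ (by linarith : (0:ℝ) ≤ H)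
        have := hlin ▸ (hcomb.trans_eq hval1)
        linarith [htail2, this]
    _ ≤ H * ((4 * (T ^ (H - 1/2) * (t-s) ^ ((1:ℝ)/2)) * (T ^ (H - 1/2) / (H - 1/2)))
          + (2*T) ^ (2*H-1) * (2 * (t-s) ^ ((1:ℝ)/2))) := by
        apply mul_le_mul_of_nonneg_left _ (by linarith : (0:ℝ) ≤ H)
        have key : 4 * (t-s) ^ H * (s ^ (H - 1/2) / (H - 1/2))
            ≤ 4 * (T ^ (H - 1/2) * (t-s) ^ ((1:ℝ)/2)) * (T ^ (H - 1/2) / (H - 1/2)) := by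
          rw [e1]
          have k1 : 4 * ((t-s) ^ (H - 1/2) * (t-s) ^ ((1:ℝ)/2))
              ≤ 4 * (T ^ (H - 1/2) * (t-s) ^ ((1:ℝ)/2)) := by
            have := mul_le_mul_of_nonneg_right b1 hu
            linarith
          have k2 : s ^ (H - 1/2) / (H - 1/2) ≤ T ^ (H - 1/2) / (H - 1/2) :=
            (div_le_div_iff_of_pos_right (by linarith)).2 b2
          exact mul_le_mul k1 k2 (div_nonneg hs12 (by linarith))
            (mul_nonneg (by norm_num) (mul_nonneg hTP.le hu))
        linarith
    _ = H * (4 * T ^ (H - 1/2) * T ^ (H - 1/2) / (H - 1/2) + (2*T) ^ (2*H-1) * 2)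
          * (t - s) ^ ((1:ℝ)/2) := by ring
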